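/- Let Δ, d, k be positive integers with (d+1)k ≥ Δ + 1, and let G be a graph with maximum degree at most Δ. Suppose that G has no equitable d-degenerate k-colouring but has a near-equitable d-degenerate k-colouring φ. Then the last subdigraph D_- of the decomposition of the accessible classes of φ contains at least two colour classes, i.e. |V(D_-)| ≥ 2. -/

import Mathlib

open Finset

attribute [local instance] Classical.propDecidable

variable {V : Type*} [Fintype V] [DecidableEq V]

/-- The subgraph of `G` induced on the vertex set `S` is `d`-degenerate: every nonempty
subset of `S` contains a vertex having at most `d` neighbours inside that subset. -/
def DegenOn (G : SimpleGraph V) (d : ℕ) (S : Finset V) : Prop :=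
  ∀ s : Finset V, s ⊆ S → s.Nonempty → ∃ v ∈ s, (s.filter (fun u => G.Adj v u)).card ≤ d

/-- The colour class of colour `i` under the colouring `f`. -/
def cls {k : ℕ} (f : V → Fin k) (i : Fin k) : Finset V :=
  Finset.univ.filter (fun v => f v = i)

/-- `f` is a `d`-degenerate `k`-colouring of `G`: each colour class induces a
`d`-degenerate subgraph. -/
def IsDegenColoring (G : SimpleGraph V) (d : ℕ) {k : ℕ} (f : V → Fin k) : Prop :=
  ∀ i, DegenOn G d (cls f i)

/-- `f` is an equitable colouring: any two colour classes differ in size by at most one. -/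
def IsEquitable {k : ℕ} (f : V → Fin k) : Prop :=
  ∀ i j, (cls f i).card ≤ (cls f j).card + 1

/-- `f` is a near-equitable `k`-colouring of an `n`-vertex graph (conditions (E1),(E2)):
with the colour classes sorted by size, `⌊n/k⌋ − 1 ≤ |C_1| ≤ ⌊n/k⌋ ≤ |C_2| ≤ … ≤
|C_{k−1}| ≤ ⌈n/k⌉ ≤ |C_k| ≤ ⌈n/k⌉ + 1`, and `2 ≤ |C_k| − |C_1| ≤ 3`.  Stated label-free:
all class sizes lie in `[⌊n/k⌋ − 1, ⌈n/k⌉ + 1]`, at most one class is smaller than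
`⌊n/k⌋`, at most one class is larger than `⌈n/k⌉`, some class has size `≤ ⌊n/k⌋`, some
class has size `≥ ⌈n/k⌉`, and the largest class exceeds the smallest by at least `2` and
at most `3`.  (Here `⌈n/k⌉ = (n + k - 1) / k` in natural division.) -/
def NearEquitable (n : ℕ) {k : ℕ} (f : V → Fin k) : Prop :=
  (∀ i, n / k - 1 ≤ (cls f i).card ∧ (cls f i).card ≤ (n + k - 1) / k + 1) ∧
  (Finset.univ.filter (fun i => (cls f i).card < n / k)).card ≤ 1 ∧
  (Finset.univ.filter (fun i => (n + k - 1) / k < (cls f i).card)).card ≤ 1 ∧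
  (∃ i, (cls f i).card ≤ n / k) ∧
  (∃ i, (n + k - 1) / k ≤ (cls f i).card) ∧
  (∃ i j, (cls f i).card + 2 ≤ (cls f j).card) ∧
  (∀ i j, (cls f j).card ≤ (cls f i).card + 3)

/-- The vertex `v` is movable to the colour class of colour `j`: `v` has a different
colour, and adding `v` to that class keeps it `d`-degenerate. -/
def Movable (G : SimpleGraph V) (d : ℕ) {k : ℕ} (f : V → Fin k) (v : V) (j : Fin k) :
    Prop :=
  f v ≠ j ∧ DegenOn G d (insert v (cls f j))

/-- Arc of the auxiliary digraph `D`: there is an arc from colour `i` to colour `j`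
(`i ≠ j`) iff some vertex of class `i` is movable to class `j`. -/
def MvArc (G : SimpleGraph V) (d : ℕ) {k : ℕ} (f : V → Fin k) (i j : Fin k) : Prop :=
  i ≠ j ∧ ∃ v, f v = i ∧ Movable G d f v j

/-- Class `i` is accessible to class `j`: `D` has a (possibly trivial) directed path from
`i` to `j`. -/
def AccTo (G : SimpleGraph V) (d : ℕ) {k : ℕ} (f : V → Fin k) : Fin k → Fin k → Prop :=
  Relation.ReflTransGen (MvArc G d f)

/-- Accessibility within the subdigraph of `D` induced on the set `S` of colours. -/
def AccToWithin (G : SimpleGraph V) (d : ℕ) {k : ℕ} (f : V → Fin k)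
    (S : Finset (Fin k)) : Fin k → Fin k → Prop :=
  Relation.ReflTransGen (fun i j => i ∈ S ∧ j ∈ S ∧ MvArc G d f i j)

/-- Class `i` has minimum size among all colour classes. -/
def IsMinClass {k : ℕ} (f : V → Fin k) (i : Fin k) : Prop :=
  ∀ j, (cls f i).card ≤ (cls f j).card

/-- Class `i` is accessible: it is accessible to some colour class of minimum size. -/
def Accessible (G : SimpleGraph V) (d : ℕ) {k : ℕ} (f : V → Fin k) (i : Fin k) : Prop :=
  ∃ j, IsMinClass f j ∧ AccTo G d f i j

/-- `𝒜`: the set of accessible colours. -/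
noncomputable def Aset (G : SimpleGraph V) (d : ℕ) {k : ℕ} (f : V → Fin k) :
    Finset (Fin k) :=
  Finset.univ.filter (fun i => Accessible G d f i)

/-- `ℬ`: the set of non-accessible colours. -/
noncomputable def Bset (G : SimpleGraph V) (d : ℕ) {k : ℕ} (f : V → Fin k) :
    Finset (Fin k) :=
  Finset.univ.filter (fun i => ¬ Accessible G d f i)

/-- `A`: the union of the accessible colour classes. -/
noncomputable def Averts (G : SimpleGraph V) (d : ℕ) {k : ℕ} (f : V → Fin k) : Finset V :=
  Finset.univ.filter (fun v => Accessible G d f (f v))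

/-- `B`: the union of the non-accessible colour classes. -/
noncomputable def Bverts (G : SimpleGraph V) (d : ℕ) {k : ℕ} (f : V → Fin k) : Finset V :=
  Finset.univ.filter (fun v => ¬ Accessible G d f (f v))

/-- The colours used by the subdigraphs `D_1, …, D_{i-1}` preceding `D_i`. -/
def UsedBefore {k q : ℕ} (𝒟 : Fin q → Finset (Fin k)) (i : Fin q) : Finset (Fin k) :=
  (Finset.univ.filter (fun i' => i' < i)).biUnion 𝒟

/-- `(𝒟, trm)` is the decomposition `D_1, …, D_q` of `𝒜` with terminals
`trm 1, …, trm q`: at each step `i`, `trm i` is the smallest-index minimum-size colour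
class not yet used (here "smallest index" is the smallest colour, the classes being
labelled in non-decreasing order of size), `D_i` consists of the unused accessible classes
accessible to `trm i`, the process exhausts all minimum-size classes, and every accessible
class belongs to some `D_i`. -/
def IsDecomp (G : SimpleGraph V) (d : ℕ) {k : ℕ} (f : V → Fin k) {q : ℕ}
    (𝒟 : Fin q → Finset (Fin k)) (trm : Fin q → Fin k) : Prop :=
  (∀ i : Fin q,
      IsMinClass f (trm i) ∧
      trm i ∉ UsedBefore 𝒟 i ∧
      (∀ j, IsMinClass f j → j ∉ UsedBefore 𝒟 i → trm i ≤ j) ∧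
      (∀ u, u ∈ 𝒟 i ↔
        Accessible G d f u ∧ u ∉ UsedBefore 𝒟 i ∧ AccTo G d f u (trm i))) ∧
  (∀ j, IsMinClass f j → ∃ i, j ∈ 𝒟 i) ∧
  (∀ u, Accessible G d f u → ∃ i, u ∈ 𝒟 i)

/-- `𝒯` for the choice `U` of removed class: the classes of `D_- − U` (here `Dl` is the
vertex set of `D_-` and `Cm` its terminal `C_-`) that are non-accessible to `C_-` in
`D_- − U`. -/
noncomputable def TSet (G : SimpleGraph V) (d : ℕ) {k : ℕ} (f : V → Fin k)
    (Dl : Finset (Fin k)) (Cm U : Fin k) : Finset (Fin k) :=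
  (Dl.erase U).filter (fun W => ¬ AccToWithin G d f (Dl.erase U) W Cm)

/-- `U` is a valid choice of `U_-`: it belongs to `D_-` and minimises the number of
classes of `D_- − U` that are non-accessible to `C_-` there. -/
def IsUminus (G : SimpleGraph V) (d : ℕ) {k : ℕ} (f : V → Fin k)
    (Dl : Finset (Fin k)) (Cm U : Fin k) : Prop :=
  U ∈ Dl ∧ ∀ U' ∈ Dl, (TSet G d f Dl Cm U).card ≤ (TSet G d f Dl Cm U').card

/-- `e` is a degeneracy ordering of the induced subgraph `G[S]` for the parameter `d`. -/
def IsDegOrdOn (G : SimpleGraph V) (d : ℕ) (S : Finset V)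
    (e : Fin S.card ≃ {x // x ∈ S}) : Prop :=
  ∀ i, (Finset.univ.filter (fun j => j < i ∧ G.Adj (e i : V) (e j : V))).card ≤ d

/-- The parameter `p` of a degeneracy ordering of `G[S]`: the largest (1-based) index
whose vertex has exactly `d` earlier neighbours (`0` if none). -/
noncomputable def ordPOn (G : SimpleGraph V) (d : ℕ) (S : Finset V)
    (e : Fin S.card ≃ {x // x ∈ S}) : ℕ :=
  (Finset.univ.filter (fun i =>
    (Finset.univ.filter (fun j => j < i ∧ G.Adj (e i : V) (e j : V))).card = d)).sup
      (fun i => (i : ℕ) + 1)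

/-- `p(G[S])`: the minimum of `ordPOn` over all degeneracy orderings of `G[S]`. -/
noncomputable def pMinOn (G : SimpleGraph V) (d : ℕ) (S : Finset V) : ℕ :=
  sInf {p | ∃ e : Fin S.card ≃ {x // x ∈ S}, IsDegOrdOn G d S e ∧ ordPOn G d S e = p}

/-- `V*` of the ordering `e` of `G[S]`: the set of its first `ordPOn G d S e` vertices. -/
noncomputable def VstarOf (G : SimpleGraph V) (d : ℕ) (S : Finset V)
    (e : Fin S.card ≃ {x // x ∈ S}) : Finset V :=
  (Finset.univ.filter (fun i : Fin S.card => (i : ℕ) < ordPOn G d S e)).image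
    (fun i => (e i : V))

/-- The size of the largest colour class, `|C_k|`. -/
def maxS {k : ℕ} (f : V → Fin k) : ℕ := Finset.univ.sup (fun i => (cls f i).card)

/-- The size of the smallest colour class, `|C_1|`. -/
noncomputable def minS {k : ℕ} (f : V → Fin k) : ℕ := sInf {m | ∃ i, (cls f i).card = m}

/-- `Σ_{V ∈ 𝒯} |V*| = Σ_{V ∈ 𝒯} p(G[V])`. -/
noncomputable def sumT (G : SimpleGraph V) (d : ℕ) {k : ℕ} (f : V → Fin k)
    (𝒯 : Finset (Fin k)) : ℕ :=
  ∑ i ∈ 𝒯, pMinOn G d (cls f i)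

/-- Lexicographic comparison of triples of naturals. -/
def Lex3Le (x y : ℕ × ℕ × ℕ) : Prop :=
  x.1 < y.1 ∨ (x.1 = y.1 ∧ (x.2.1 < y.2.1 ∨ (x.2.1 = y.2.1 ∧ x.2.2 ≤ y.2.2)))

/-- The triple `(|C_k| − |C_1|, b, Σ_{V ∈ 𝒯} |V*|)` associated with a colouring `f` and a
choice `𝒯` of the set of classes `𝒯`. -/
noncomputable def tripleOf (G : SimpleGraph V) (d : ℕ) {k : ℕ} (f : V → Fin k)
    (𝒯 : Finset (Fin k)) : ℕ × ℕ × ℕ :=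
  (maxS f - minS f, (Bset G d f).card, sumT G d f 𝒯)

/-- The near-equitable `d`-degenerate colouring `f` (with its associated set `𝒯f`) is
minimal: its triple `(|C_k| − |C_1|, b, Σ_{V ∈ 𝒯} |V*|)` is lexicographically smallest
among all near-equitable `d`-degenerate `k`-colourings of `G` with their associated
choices of decomposition and `U_-`. -/
def MinimalNE (G : SimpleGraph V) (d : ℕ) {k : ℕ} (f : V → Fin k)
    (𝒯f : Finset (Fin k)) : Prop :=
  ∀ g : V → Fin k, IsDegenColoring G d g → NearEquitable (Fintype.card V) g →
    ∀ (q : ℕ) (hq : 0 < q) (𝒟 : Fin q → Finset (Fin k)) (trm : Fin q → Fin k),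
      IsDecomp G d g 𝒟 trm →
      ∀ U : Fin k,
        IsUminus G d g (𝒟 ⟨q - 1, by omega⟩) (trm ⟨q - 1, by omega⟩) U →
        Lex3Le (tripleOf G d f 𝒯f)
          (tripleOf G d g (TSet G d g (𝒟 ⟨q - 1, by omega⟩) (trm ⟨q - 1, by omega⟩) U))

/-- `G[S]` has an equitable `d`-degenerate `m`-colouring. -/
def HasEqDegenColOn (G : SimpleGraph V) (d : ℕ) (S : Finset V) (m : ℕ) : Prop :=
  ∃ g : V → Fin m,
    (∀ i, DegenOn G d (S.filter (fun v => g v = i))) ∧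
    (∀ i j, (S.filter (fun v => g v = i)).card ≤ (S.filter (fun v => g v = j)).card + 1)

section AuxLemmas

variable {G : SimpleGraph V} {d : ℕ} {k : ℕ} {f : V → Fin k}

lemma mem_cls {v : V} {i : Fin k} : v ∈ cls f i ↔ f v = i := by
  simp [cls]

lemma degenOn_subset {S S' : Finset V} (hsub : S' ⊆ S) (h : DegenOn G d S) :
    DegenOn G d S' :=
  fun s hs hne => h s (hs.trans hsub) hne

lemma degenOn_insert {S : Finset V} {v : V} (h : DegenOn G d S)
    (hv : (S.filter (fun u => G.Adj v u)).card ≤ d) : DegenOn G d (insert v S) := by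
  intro s hs hne
  by_cases hvs : v ∈ s
  · refine ⟨v, hvs, ?_⟩
    refine le_trans (Finset.card_le_card ?_) hv
    intro u hu
    simp only [Finset.mem_filter] at hu ⊢
    have huv : u ≠ v := by rintro rfl; exact G.loopless.irrefl _ hu.2
    have huS : u ∈ S := by
      rcases Finset.mem_insert.mp (hs hu.1) with h' | h'
      · exact absurd h' huv
      · exact h'
    exact ⟨huS, hu.2⟩
  · refine h s (fun u hu => ?_) hne
    rcases Finset.mem_insert.mp (hs hu) with h' | h'
    · exact absurd (h' ▸ hu) hvs
    · exact h'

lemma many_nbrs_of_not_degen {S : Finset V} {v : V} (hS : DegenOn G d S)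
    (h : ¬ DegenOn G d (insert v S)) :
    d + 1 ≤ (S.filter (fun u => G.Adj v u)).card := by
  by_contra hc
  push_neg at hc
  exact h (degenOn_insert hS (by omega))

lemma core_of_not_degen {S : Finset V} {v : V} (hS : DegenOn G d S)
    (h : ¬ DegenOn G d (insert v S)) :
    ∃ s : Finset V, s ⊆ S ∧ d + 1 ≤ (s.filter (fun u => G.Adj v u)).card ∧
      ∀ w ∈ s, d ≤ (s.filter (fun u => G.Adj w u)).card := by
  simp only [DegenOn, not_forall] at h
  obtain ⟨s₀, hsub, hne, hbad⟩ := h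
  push_neg at hbad
  have hv : v ∈ s₀ := by
    by_contra hv
    have hsS : s₀ ⊆ S := by
      intro u hu
      rcases Finset.mem_insert.mp (hsub hu) with h' | h'
      · exact absurd (h' ▸ hu) hv
      · exact h'
    obtain ⟨w, hw, hwc⟩ := hS s₀ hsS hne
    exact absurd hwc (Nat.not_le.mpr (hbad w hw))
  refine ⟨s₀.erase v, ?_, ?_, ?_⟩
  · intro u hu
    have h1 := Finset.mem_of_mem_erase hu
    have h2 := Finset.ne_of_mem_erase hu
    rcases Finset.mem_insert.mp (hsub h1) with h' | h'
    · exact absurd h' h2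
    · exact h'
  · have heq : (s₀.erase v).filter (fun u => G.Adj v u) = s₀.filter (fun u => G.Adj v u) := by
      ext u
      simp only [Finset.mem_filter, Finset.mem_erase]
      constructor
      · rintro ⟨⟨_, h1⟩, h2⟩; exact ⟨h1, h2⟩
      · rintro ⟨h1, h2⟩
        exact ⟨⟨fun huv => G.loopless.irrefl _ (huv ▸ h2), h1⟩, h2⟩
    rw [heq]
    exact hbad v hv
  · intro w hw
    have hw' := Finset.mem_of_mem_erase hw
    have hcard := hbad w hw'
    have hsub2 : (s₀.filter (fun u => G.Adj w u)).erase v ⊆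
        (s₀.erase v).filter (fun u => G.Adj w u) := by
      intro u hu
      simp only [Finset.mem_erase, Finset.mem_filter] at hu ⊢
      exact ⟨⟨hu.1, hu.2.1⟩, hu.2.2⟩
    have := Finset.card_le_card hsub2
    have hle := Finset.card_erase_of_mem (a := v) (s := s₀.filter (fun u => G.Adj w u))
    by_cases hvf : v ∈ s₀.filter (fun u => G.Adj w u)
    · have := hle hvf
      omega
    · rw [Finset.erase_eq_of_notMem hvf] at hsub2
      have := Finset.card_le_card hsub2
      omega

lemma cls_update (f' : V → Fin k) (v : V) (j C : Fin k) :
    cls (Function.update f' v j) C =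
      if C = j then insert v (cls f' C) else (cls f' C).erase v := by
  ext u
  by_cases huv : u = v
  · subst huv
    by_cases hCj : C = j
    · simp [mem_cls, hCj, Function.update_self]
    · simp [mem_cls, hCj, Function.update_self, Ne.symm hCj]
  · by_cases hCj : C = j <;>
      simp [mem_cls, hCj, Function.update_of_ne huv, huv]

lemma getLast?_cons_of_ne_nil {α : Type*} {l : List α} (h : l ≠ []) (c : α) :
    (c :: l).getLast? = l.getLast? := by
  cases l with
  | nil => exact absurd rfl h
  | cons y t => exact List.getLast?_cons_cons

lemma exists_nodup_chain {α : Type*} {r : α → α → Prop} {a b : α}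
    (h : Relation.ReflTransGen r a b) :
    a = b ∨ ∃ l : List α, List.Chain r a l ∧ l.getLast? = some b ∧ (a :: l).Nodup := by
  induction h using Relation.ReflTransGen.head_induction_on with
  | refl => exact Or.inl rfl
  | head hac hcb ih =>
    rename_i x c
    rcases ih with rfl | ⟨l, hchain, hlast, hnodup⟩
    · by_cases hxc : x = c
      · exact Or.inl hxc
      · exact Or.inr ⟨[c], List.Chain.cons hac List.Chain.nil, rfl, by simp [hxc]⟩
    · have hlne : l ≠ [] := by intro hl; rw [hl] at hlast; simp at hlast
      have hclb : (c :: l).getLast? = some b := by rw [getLast?_cons_of_ne_nil hlne]; exact hlast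
      by_cases hmem : x ∈ c :: l
      · obtain ⟨pre, suf, hsplit⟩ := List.append_of_mem hmem
        have hchain2 : List.Chain' r (c :: l) := hchain
        rw [hsplit] at hchain2
        have hsufchain : List.Chain r x suf := List.IsChain.right_of_append hchain2
        by_cases hsufnil : suf = []
        · subst hsufnil
          left
          have : (c :: l).getLast? = some x := by
            rw [hsplit, List.getLast?_append]
            simp
          rw [this] at hclb
          exact Option.some_injective _ hclb
        · right
          have hsuflast : suf.getLast? = some b := by
            have h1 := hclb
            rw [hsplit, List.getLast?_append, getLast?_cons_of_ne_nil hsufnil x] at h1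
            obtain ⟨z, hz⟩ := List.getLast?_isSome.mpr hsufnil |> Option.isSome_iff_exists.mp
            rw [hz] at h1 ⊢
            simpa using h1
          have hsufnodup : (x :: suf).Nodup := by
            have hsuffix : (x :: suf) <:+ (c :: l) := by rw [hsplit]; exact List.suffix_append pre (x :: suf)
            exact List.Nodup.sublist hsuffix.sublist hnodup
          exact ⟨suf, hsufchain, hsuflast, hsufnodup⟩
      · exact Or.inr ⟨c :: l, List.Chain.cons hac hchain, hclb, List.nodup_cons.mpr ⟨hmem, hnodup⟩⟩
lemma build_move (hf : IsDegenColoring G d f) :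
    ∀ (l : List (Fin k)) (H X : Fin k), List.Chain (MvArc G d f) H l →
      (H :: l).Nodup → l.getLast? = some X →
      ∃ g : V → Fin k, IsDegenColoring G d g ∧
        (∃ v, f v = H ∧ cls g H = (cls f H).erase v) ∧
        (cls g X).card = (cls f X).card + 1 ∧
        (∀ C, C ≠ H → C ≠ X → (cls g C).card = (cls f C).card) ∧
        (∀ u, g u ≠ f u → f u ∈ H :: l ∧ g u ∈ l) := by
  intro l
  induction l with
  | nil => intro H X _ _ hlast; simp at hlast
  | cons Y t ih =>
    intro H X hchain hnodup hlast
    obtain ⟨harc, hchain'⟩ := List.chain_cons.mp hchain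
    obtain ⟨hHY, v, hv, hmov⟩ := harc
    cases t with
    | nil =>
      have hXY : Y = X := by simpa using hlast
      subst hXY
      set g := Function.update f v Y with hg
      have hclsW : cls g H = (cls f H).erase v := by
        rw [hg, cls_update, if_neg hHY]
      have hclsY : cls g Y = insert v (cls f Y) := by
        rw [hg, cls_update, if_pos rfl]
      have hclsC : ∀ C, C ≠ H → C ≠ Y → cls g C = cls f C := by
        intro C h1 h2
        rw [hg, cls_update, if_neg h2, Finset.erase_eq_of_notMem]
        rw [mem_cls, hv]
        exact fun hc => h1 hc.symm
      refine ⟨g, ?_, ⟨v, hv, hclsW⟩, ?_, ?_, ?_⟩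
      · intro C
        by_cases hC1 : C = Y
        · rw [hC1, hclsY]; exact hmov.2
        · by_cases hC2 : C = H
          · rw [hC2, hclsW]
            exact degenOn_subset (Finset.erase_subset _ _) (hf H)
          · rw [hclsC C hC2 hC1]; exact hf C
      · rw [hclsY, Finset.card_insert_of_notMem]
        intro hmem
        exact hmov.1 (mem_cls.mp hmem)
      · intro C h1 h2; rw [hclsC C h1 h2]
      · intro u hu
        have huv : u = v := by
          by_contra hne
          rw [hg] at hu
          exact hu (Function.update_of_ne hne _ _)
        subst huv
        constructor
        · rw [hv]; exact List.mem_cons_self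
        · have : g u = Y := by rw [hg]; exact Function.update_self _ _ _
          rw [this]; exact List.mem_singleton_self _
    | cons Y' t' =>
      have hlast' : (Y' :: t').getLast? = some X := by
        rw [getLast?_cons_of_ne_nil (by simp) Y] at hlast; exact hlast
      have hnodup' : (Y :: Y' :: t').Nodup := (List.nodup_cons.mp hnodup).2
      obtain ⟨g, hgdeg, ⟨vY, hvY, hclsgY⟩, hgX, hgoth, hgmoved⟩ :=
        ih Y X hchain' hnodup' hlast'
      have hHnot : H ∉ Y :: Y' :: t' := (List.nodup_cons.mp hnodup).1
      have hgv : g v = f v := by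
        by_contra hgv
        exact hHnot (hv ▸ (hgmoved v hgv).1)
      have hgvH : g v = H := by rw [hgv, hv]
      have hXmem : X ∈ Y' :: t' := List.mem_of_mem_getLast? (by rw [hlast']; rfl)
      have hXY : X ≠ Y := by
        intro h
        exact (List.nodup_cons.mp hnodup').1 (h ▸ hXmem)
      have hXH : X ≠ H := by
        intro h
        exact hHnot (h ▸ List.mem_cons_of_mem _ hXmem)
      have hclsgH : cls g H = cls f H := by
        ext u
        simp only [mem_cls]
        constructor
        · intro h
          by_cases hgu : g u = f u
          · rw [← hgu]; exact h
          · exact absurd (List.mem_cons_of_mem _ (h ▸ (hgmoved u hgu).2)) hHnot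
        · intro h
          by_cases hgu : g u = f u
          · rw [hgu]; exact h
          · exact absurd (h ▸ (hgmoved u hgu).1) hHnot
      set g' := Function.update g v Y with hg'
      have hupd : ∀ C, cls g' C =
          if C = Y then insert v (cls g C) else (cls g C).erase v := by
        intro C; rw [hg', cls_update]
      have hclsW' : cls g' H = (cls f H).erase v := by
        rw [hupd, if_neg hHY, hclsgH]
      have hclsY' : cls g' Y = insert v ((cls f Y).erase vY) := by
        rw [hupd, if_pos rfl, hclsgY]
      have hclsC' : ∀ C, C ≠ H → C ≠ Y → cls g' C = cls g C := by
        intro C h1 h2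
        rw [hupd, if_neg h2, Finset.erase_eq_of_notMem]
        rw [mem_cls, hgvH]
        exact fun hc => h1 hc.symm
      refine ⟨g', ?_, ⟨v, hv, hclsW'⟩, ?_, ?_, ?_⟩
      · intro C
        by_cases hC1 : C = Y
        · rw [hC1, hclsY']
          refine degenOn_subset ?_ hmov.2
          exact Finset.insert_subset_insert _ (Finset.erase_subset _ _)
        · by_cases hC2 : C = H
          · rw [hC2, hclsW', ← hclsgH]
            exact degenOn_subset (Finset.erase_subset _ _) (hgdeg H)
          · rw [hclsC' C hC2 hC1]; exact hgdeg C
      · rw [hclsC' X hXH hXY]; exact hgX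
      · intro C h1 h2
        by_cases hC1 : C = Y
        · subst hC1
          rw [hclsY', Finset.card_insert_of_notMem, Finset.card_erase_of_mem (mem_cls.mpr hvY)]
          · have hpos : 0 < (cls f C).card := Finset.card_pos.mpr ⟨vY, mem_cls.mpr hvY⟩
            omega
          · intro hmem
            have := Finset.mem_of_mem_erase hmem
            rw [mem_cls, hv] at this
            exact h1 this.symm
        · rw [hclsC' C h1 hC1]
          exact hgoth C hC1 h2
      · intro u hu
        by_cases huv : u = v
        · subst huv
          constructor
          · rw [hv]; exact List.mem_cons_self
          · have : g' u = Y := by rw [hg']; exact Function.update_self _ _ _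
            rw [this]; exact List.mem_cons_self
        · have hgu : g' u = g u := by rw [hg']; exact Function.update_of_ne huv _ _
          rw [hgu] at hu ⊢
          have := hgmoved u hu
          exact ⟨List.mem_cons_of_mem _ this.1, List.mem_cons_of_mem _ this.2⟩

lemma move_along (hf : IsDegenColoring G d f)
    {W X : Fin k} (hWX : W ≠ X) (hacc : AccTo G d f W X) :
    ∃ g : V → Fin k, IsDegenColoring G d g ∧
      (cls g W).card + 1 = (cls f W).card ∧
      (cls g X).card = (cls f X).card + 1 ∧
      ∀ C, C ≠ W → C ≠ X → (cls g C).card = (cls f C).card := by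
  rcases exists_nodup_chain hacc with h | ⟨l, hchain, hlast, hnodup⟩
  · exact absurd h hWX
  obtain ⟨g, hgdeg, ⟨v, hv, hclsW⟩, hX, hoth, -⟩ :=
    build_move hf l W X hchain hnodup hlast
  refine ⟨g, hgdeg, ?_, hX, hoth⟩
  rw [hclsW, Finset.card_erase_of_mem (mem_cls.mpr hv)]
  have : 0 < (cls f W).card := Finset.card_pos.mpr ⟨v, mem_cls.mpr hv⟩
  omega
lemma equitable_of_move {n : ℕ} (hk : 0 < k) {g : V → Fin k}
    (hne : NearEquitable n f)
    {W X : Fin k}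
    (hmax : ∀ i, (cls f i).card ≤ (cls f W).card)
    (hmin : ∀ i, (cls f X).card ≤ (cls f i).card)
    (hgap : (cls f X).card + 2 ≤ (cls f W).card)
    (hW : (cls g W).card + 1 = (cls f W).card)
    (hX : (cls g X).card = (cls f X).card + 1)
    (hoth : ∀ C, C ≠ W → C ≠ X → (cls g C).card = (cls f C).card) :
    IsEquitable g := by
  obtain ⟨h1, h2, h3, h4, h5, -, -⟩ := hne
  set m := n / k with hm
  set M := (n + k - 1) / k with hM
  have hmM : m ≤ M := Nat.div_le_div_right (by omega)
  have hMm : M ≤ m + 1 := by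
    calc M ≤ (n + k) / k := Nat.div_le_div_right (by omega)
      _ = m + 1 := Nat.add_div_right n hk
  have hsm : (cls f X).card ≤ m := by
    obtain ⟨i4, hi4⟩ := h4
    exact le_trans (hmin i4) hi4
  have hLM : M ≤ (cls f W).card := by
    obtain ⟨i5, hi5⟩ := h5
    exact le_trans hi5 (hmax i5)
  have hLM' : (cls f W).card ≤ M + 1 := (h1 W).2
  have hZlb : m - 1 ≤ (cls f X).card := (h1 X).1
  have hlow : ∀ i, i ≠ X → m ≤ (cls f i).card := by
    intro i hi
    by_contra hc
    push_neg at hc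
    have hXc : (cls f X).card < m := lt_of_le_of_lt (hmin i) hc
    exact hi (Finset.card_le_one.mp h2 i
      (Finset.mem_filter.mpr ⟨Finset.mem_univ _, hc⟩) X
      (Finset.mem_filter.mpr ⟨Finset.mem_univ _, hXc⟩))
  have hhigh : ∀ i, i ≠ W → (cls f i).card ≤ M := by
    intro i hi
    by_contra hc
    push_neg at hc
    have hWc : M < (cls f W).card := lt_of_lt_of_le hc (hmax i)
    exact hi (Finset.card_le_one.mp h3 i
      (Finset.mem_filter.mpr ⟨Finset.mem_univ _, hc⟩) W
      (Finset.mem_filter.mpr ⟨Finset.mem_univ _, hWc⟩))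
  have key : ∀ i, m ≤ (cls g i).card ∧ (cls g i).card ≤ m + 1 := by
    intro i
    by_cases hiW : i = W
    · subst hiW; omega
    · by_cases hiX : i = X
      · subst hiX; omega
      · have l1 := hlow i hiX
        have l2 := hhigh i hiW
        have l3 := hoth i hiW hiX
        omega
  intro i j
  have k1 := key i
  have k2 := key j
  omega
end AuxLemmas

/-- **Lemma 2.3.**  Let `Δ, d, k` be positive integers with `(d+1)k ≥ Δ + 1`, and let `G`
be a graph with maximum degree at most `Δ`.  Suppose that `G` has no equitable
`d`-degenerate `k`-colouring, but has a near-equitable `d`-degenerate `k`-colouring `f`.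
Then the last subdigraph `D_-` of the decomposition of the accessible classes of `f`
contains at least two colour classes. -/
theorem Dminus_card_ge_two (Δ d k : ℕ) (hΔ : 0 < Δ) (hd : 0 < d) (hk : 0 < k)
    (hΔk : Δ + 1 ≤ (d + 1) * k)
    (G : SimpleGraph V)
    (hdeg : ∀ v : V, (Finset.univ.filter (fun u => G.Adj v u)).card ≤ Δ)
    (hnoeq : ¬ ∃ g : V → Fin k, IsDegenColoring G d g ∧ IsEquitable g)
    (f : V → Fin k) (hf : IsDegenColoring G d f)
    (hne : NearEquitable (Fintype.card V) f)
    (q : ℕ) (hq : 0 < q) (𝒟 : Fin q → Finset (Fin k)) (trm : Fin q → Fin k)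
    (hdec : IsDecomp G d f 𝒟 trm) :
    2 ≤ (𝒟 ⟨q - 1, by omega⟩).card := by
  by_contra hcard0
  obtain ⟨hdec1, hdec2, hdec3⟩ := hdec
  set ℓ : Fin q := ⟨q - 1, by omega⟩ with hℓdef
  have hcard : (𝒟 ℓ).card < 2 := by
    have : ¬ 2 ≤ (𝒟 ℓ).card := hcard0
    omega
  set T := trm ℓ with hTdef
  have hminT : IsMinClass f T := (hdec1 ℓ).1
  have haccT : Accessible G d f T := ⟨T, hminT, Relation.ReflTransGen.refl⟩
  have hTmem : T ∈ 𝒟 ℓ :=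
    ((hdec1 ℓ).2.2.2 T).mpr ⟨haccT, (hdec1 ℓ).2.1, Relation.ReflTransGen.refl⟩
  have htop : ∀ i : Fin q, i ≤ ℓ := by
    intro i
    have := i.isLt
    simp only [hℓdef, Fin.le_def]
    omega
  have hdisj : ∀ i j : Fin q, i < j → ∀ u, u ∈ 𝒟 i → u ∈ 𝒟 j → False := by
    intro i j hij u hui huj
    have h := (((hdec1 j).2.2.2 u).mp huj).2.1
    exact h (Finset.mem_biUnion.mpr
      ⟨i, Finset.mem_filter.mpr ⟨Finset.mem_univ _, hij⟩, hui⟩)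
  have hsing : 𝒟 ℓ = {T} := by
    apply Finset.eq_singleton_iff_unique_mem.mpr
    refine ⟨hTmem, fun x hx => ?_⟩
    by_contra hxT
    have : 1 < (𝒟 ℓ).card := Finset.one_lt_card.mpr ⟨x, hx, T, hTmem, hxT⟩
    omega
  have claim1 : ∀ Y, Accessible G d f Y → Y ≠ T → ∀ w, f w = T →
      ¬ Movable G d f w Y := by
    intro Y haccY hYT w hw hmov
    obtain ⟨i, hYi⟩ := hdec3 Y haccY
    have hYacc2 : AccTo G d f Y (trm i) := (((hdec1 i).2.2.2 Y).mp hYi).2.2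
    have harc : MvArc G d f T Y := ⟨fun h => hYT h.symm, w, hw, hmov⟩
    have hTacc : AccTo G d f T (trm i) := Relation.ReflTransGen.head harc hYacc2
    have hTnotused : T ∉ UsedBefore 𝒟 i := by
      intro hused
      obtain ⟨j, hj, hTj⟩ := Finset.mem_biUnion.mp hused
      have hjlt : j < i := (Finset.mem_filter.mp hj).2
      have hjℓ : j < ℓ := lt_of_lt_of_le hjlt (htop i)
      exact hdisj j ℓ hjℓ T hTj hTmem
    have hTi : T ∈ 𝒟 i := ((hdec1 i).2.2.2 T).mpr ⟨haccT, hTnotused, hTacc⟩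
    have hiℓ : i = ℓ := by
      by_contra hne'
      rcases lt_or_gt_of_ne hne' with hlt | hgt
      · exact hdisj i ℓ hlt T hTi hTmem
      · exact hdisj ℓ i hgt T hTmem hTi
    rw [hiℓ, hsing] at hYi
    exact hYT (Finset.mem_singleton.mp hYi)
  have claim2 : ∀ u : V, ¬ Accessible G d f (f u) → ¬ Movable G d f u T := by
    intro u hnacc hmov
    have hfT : f u ≠ T := fun h => hnacc (by rw [h]; exact haccT)
    exact hnacc ⟨T, hminT, Relation.ReflTransGen.single ⟨hfT, u, rfl, hmov⟩⟩
  have claim3 : ∃ Y, ¬ Accessible G d f Y := by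
    by_contra hall
    push_neg at hall
    obtain ⟨W₀, -, hmax⟩ := Finset.exists_max_image Finset.univ
      (fun i => (cls f i).card) ⟨T, Finset.mem_univ T⟩
    obtain ⟨Z, hminZ, hpath⟩ := hall W₀
    obtain ⟨i0, j0, hij⟩ := hne.2.2.2.2.2.1
    have hgap : (cls f Z).card + 2 ≤ (cls f W₀).card := by
      have h1 := hminZ i0
      have h2 := hmax j0 (Finset.mem_univ _)
      omega
    have hWZ : W₀ ≠ Z := by
      intro h
      rw [h] at hgap
      omega
    obtain ⟨g, hgdeg, hgW, hgZ, hgoth⟩ := move_along hf hWZ hpath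
    refine hnoeq ⟨g, hgdeg, ?_⟩
    exact equitable_of_move hk hne (fun i => hmax i (Finset.mem_univ i))
      hminZ hgap hgW hgZ hgoth
  obtain ⟨Y₀, hY₀⟩ := claim3
  set s := (cls f T).card with hs
  set Acl : Finset (Fin k) := Finset.univ.filter (fun i => Accessible G d f i) with hAcl
  set Bcl : Finset (Fin k) := Finset.univ.filter (fun i => ¬ Accessible G d f i) with hBcl
  set Bv : Finset V := Finset.univ.filter (fun v => ¬ Accessible G d f (f v)) with hBvdef
  set U : Finset V :=
    (cls f T).filter (fun w => d ≤ ((cls f T).filter (fun u => G.Adj w u)).card)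
    with hUdef
  have hBU : ∀ u ∈ Bv, d + 1 ≤ (U.filter (fun w => G.Adj u w)).card := by
    intro u hu
    have hnacc : ¬ Accessible G d f (f u) := (Finset.mem_filter.mp hu).2
    have hnm := claim2 u hnacc
    have hfT : f u ≠ T := fun h => hnacc (by rw [h]; exact haccT)
    have hnd : ¬ DegenOn G d (insert u (cls f T)) := fun h => hnm ⟨hfT, h⟩
    obtain ⟨s₁, hs₁T, hs₁u, hs₁all⟩ := core_of_not_degen (hf T) hnd
    have hsU : s₁ ⊆ U := by
      intro w hw
      refine Finset.mem_filter.mpr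
        ⟨hs₁T hw, le_trans (hs₁all w hw) (Finset.card_le_card ?_)⟩
      intro x hx
      have hx' := Finset.mem_filter.mp hx
      exact Finset.mem_filter.mpr ⟨hs₁T hx'.1, hx'.2⟩
    refine le_trans hs₁u (Finset.card_le_card ?_)
    intro x hx
    have hx' := Finset.mem_filter.mp hx
    exact Finset.mem_filter.mpr ⟨hsU hx'.1, hx'.2⟩
  have hTA : T ∈ Acl := Finset.mem_filter.mpr ⟨Finset.mem_univ _, haccT⟩
  obtain ⟨a', ha'⟩ : ∃ a', Acl.card = a' + 1 := by
    have := Finset.card_pos.mpr ⟨T, hTA⟩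
    exact ⟨Acl.card - 1, by omega⟩
  have hcap : ∀ w ∈ U, d + (d+1) * a' + (Bv.filter (fun u => G.Adj w u)).card ≤ Δ := by
    intro w hwU
    have hwT : w ∈ cls f T := (Finset.mem_filter.mp hwU).1
    have hfw : f w = T := mem_cls.mp hwT
    have hS1 : d ≤ ((cls f T).filter (fun u => G.Adj w u)).card :=
      (Finset.mem_filter.mp hwU).2
    have hdisjcls : ∀ Y1 ∈ Acl.erase T, ∀ Y2 ∈ Acl.erase T, Y1 ≠ Y2 →
        Disjoint ((cls f Y1).filter (fun u => G.Adj w u))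
          ((cls f Y2).filter (fun u => G.Adj w u)) := by
      intro Y1 _ Y2 _ h12
      rw [Finset.disjoint_left]
      intro x hx1 hx2
      have e1 := mem_cls.mp (Finset.mem_filter.mp hx1).1
      have e2 := mem_cls.mp (Finset.mem_filter.mp hx2).1
      exact h12 (e1.symm.trans e2)
    have hS2card : (d+1) * a' ≤
        ((Acl.erase T).biUnion (fun Y => (cls f Y).filter (fun u => G.Adj w u))).card := by
      rw [Finset.card_biUnion hdisjcls]
      have hkcard : (Acl.erase T).card = a' := by
        rw [Finset.card_erase_of_mem hTA, ha']
        omega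
      calc (d+1) * a' = ∑ _Y ∈ Acl.erase T, (d+1) := by
            rw [Finset.sum_const, hkcard, smul_eq_mul, mul_comm]
        _ ≤ ∑ Y ∈ Acl.erase T, ((cls f Y).filter (fun u => G.Adj w u)).card := by
            refine Finset.sum_le_sum ?_
            intro Y hY
            have hYT : Y ≠ T := Finset.ne_of_mem_erase hY
            have hYacc : Accessible G d f Y :=
              (Finset.mem_filter.mp (Finset.mem_of_mem_erase hY)).2
            have hnm := claim1 Y hYacc hYT w hfw
            have hnd : ¬ DegenOn G d (insert w (cls f Y)) := by
              intro hdg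
              refine hnm ⟨?_, hdg⟩
              rw [hfw]
              exact fun h => hYT h.symm
            exact many_nbrs_of_not_degen (hf Y) hnd
    set S1 := (cls f T).filter (fun u => G.Adj w u) with hS1def
    set S2 := (Acl.erase T).biUnion (fun Y => (cls f Y).filter (fun u => G.Adj w u))
      with hS2def
    set S3 := Bv.filter (fun u => G.Adj w u) with hS3def
    have hd12 : Disjoint S1 S2 := by
      rw [Finset.disjoint_left]
      intro x hx1 hx2
      obtain ⟨Y, hY, hxY⟩ := Finset.mem_biUnion.mp hx2
      have e1 := mem_cls.mp (Finset.mem_filter.mp hx1).1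
      have e2 := mem_cls.mp (Finset.mem_filter.mp hxY).1
      exact (Finset.ne_of_mem_erase hY) (e2.symm.trans e1)
    have hd13 : Disjoint S1 S3 := by
      rw [Finset.disjoint_left]
      intro x hx1 hx3
      have e1 := mem_cls.mp (Finset.mem_filter.mp hx1).1
      have hxB : ¬ Accessible G d f (f x) :=
        (Finset.mem_filter.mp (Finset.mem_filter.mp hx3).1).2
      rw [e1] at hxB
      exact hxB haccT
    have hd23 : Disjoint S2 S3 := by
      rw [Finset.disjoint_left]
      intro x hx2 hx3
      obtain ⟨Y, hY, hxY⟩ := Finset.mem_biUnion.mp hx2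
      have e2 := mem_cls.mp (Finset.mem_filter.mp hxY).1
      have hYacc : Accessible G d f Y :=
        (Finset.mem_filter.mp (Finset.mem_of_mem_erase hY)).2
      have hxB : ¬ Accessible G d f (f x) :=
        (Finset.mem_filter.mp (Finset.mem_filter.mp hx3).1).2
      rw [e2] at hxB
      exact hxB hYacc
    have hsubU : S1 ∪ S2 ∪ S3 ⊆ Finset.univ.filter (fun u => G.Adj w u) := by
      intro x hx
      rcases Finset.mem_union.mp hx with hx' | hx'
      · rcases Finset.mem_union.mp hx' with hx'' | hx''
        · exact Finset.mem_filter.mpr ⟨Finset.mem_univ _, (Finset.mem_filter.mp hx'').2⟩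
        · obtain ⟨Y, _, hxY⟩ := Finset.mem_biUnion.mp hx''
          exact Finset.mem_filter.mpr ⟨Finset.mem_univ _, (Finset.mem_filter.mp hxY).2⟩
      · exact Finset.mem_filter.mpr ⟨Finset.mem_univ _, (Finset.mem_filter.mp hx').2⟩
    have hcards : S1.card + S2.card + S3.card ≤ Δ := by
      have h1 : (S1 ∪ S2 ∪ S3).card ≤ Δ :=
        le_trans (Finset.card_le_card hsubU) (hdeg w)
      rw [Finset.card_union_of_disjoint (Finset.disjoint_union_left.mpr ⟨hd13, hd23⟩),
        Finset.card_union_of_disjoint hd12] at h1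
      exact h1
    omega
  have hdouble : ∑ u ∈ Bv, (U.filter (fun w => G.Adj u w)).card
      = ∑ w ∈ U, (Bv.filter (fun u => G.Adj w u)).card := by
    simp_rw [Finset.card_filter]
    rw [Finset.sum_comm]
    refine Finset.sum_congr rfl ?_
    intro w _
    refine Finset.sum_congr rfl ?_
    intro u _
    exact if_congr (G.adj_comm u w) rfl rfl
  have hsum1 : (d+1) * Bv.card ≤ ∑ w ∈ U, (Bv.filter (fun u => G.Adj w u)).card := by
    rw [← hdouble]
    calc (d+1) * Bv.card = ∑ _u ∈ Bv, (d+1) := by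
          rw [Finset.sum_const, smul_eq_mul, mul_comm]
      _ ≤ _ := Finset.sum_le_sum hBU
  have hsum2 : ∑ w ∈ U, (d + (d+1) * a' + (Bv.filter (fun u => G.Adj w u)).card)
      ≤ U.card * Δ := by
    calc ∑ w ∈ U, (d + (d+1) * a' + (Bv.filter (fun u => G.Adj w u)).card)
        ≤ ∑ _w ∈ U, Δ := Finset.sum_le_sum hcap
      _ = U.card * Δ := by rw [Finset.sum_const, smul_eq_mul]
  have hsum3 : ∑ w ∈ U, (d + (d+1) * a' + (Bv.filter (fun u => G.Adj w u)).card)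
      = U.card * (d + (d+1) * a') + ∑ w ∈ U, (Bv.filter (fun u => G.Adj w u)).card := by
    rw [Finset.sum_add_distrib, Finset.sum_const, smul_eq_mul]
  have hcomb : (d+1) * Bv.card + U.card * (d + (d+1)*a') ≤ U.card * Δ := by
    calc (d+1) * Bv.card + U.card * (d + (d+1)*a')
        ≤ (∑ w ∈ U, (Bv.filter (fun u => G.Adj w u)).card) + U.card * (d + (d+1)*a') :=
          Nat.add_le_add_right hsum1 _
      _ = ∑ w ∈ U, (d + (d+1) * a' + (Bv.filter (fun u => G.Adj w u)).card) := by
          rw [hsum3, Nat.add_comm]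
      _ ≤ U.card * Δ := hsum2
  have hbpos : 1 ≤ Bcl.card :=
    Finset.card_pos.mpr ⟨Y₀, Finset.mem_filter.mpr ⟨Finset.mem_univ _, hY₀⟩⟩
  have hab : Acl.card + Bcl.card = k := by
    rw [hAcl, hBcl, Finset.card_filter_add_card_filter_not, Finset.card_univ,
      Fintype.card_fin]
  have hBcls : ∀ Y ∈ Bcl, s + 1 ≤ (cls f Y).card := by
    intro Y hY
    have hnacc : ¬ Accessible G d f Y := (Finset.mem_filter.mp hY).2
    have hge : s ≤ (cls f Y).card := hminT Y
    rcases Nat.lt_or_ge s (cls f Y).card with h | h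
    · omega
    · exfalso
      have heq : (cls f Y).card = s := le_antisymm h hge
      have hminY : IsMinClass f Y := by
        intro j
        rw [heq]
        exact hminT j
      exact hnacc ⟨Y, hminY, Relation.ReflTransGen.refl⟩
  have hBveq : Bv = Bcl.biUnion (fun Y => cls f Y) := by
    ext u
    simp only [hBvdef, hBcl, Finset.mem_biUnion, Finset.mem_filter, Finset.mem_univ,
      true_and, mem_cls]
    constructor
    · intro h
      exact ⟨f u, h, rfl⟩
    · rintro ⟨Y, hY, hfu⟩
      rw [hfu]
      exact hY
  have hBvcard : Bcl.card * (s+1) ≤ Bv.card := by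
    have hdisjB : ∀ Y1 ∈ Bcl, ∀ Y2 ∈ Bcl, Y1 ≠ Y2 → Disjoint (cls f Y1) (cls f Y2) := by
      intro Y1 _ Y2 _ h
      rw [Finset.disjoint_left]
      intro x hx1 hx2
      exact h ((mem_cls.mp hx1).symm.trans (mem_cls.mp hx2))
    rw [hBveq, Finset.card_biUnion hdisjB]
    calc Bcl.card * (s+1) = ∑ _Y ∈ Bcl, (s+1) := by
          rw [Finset.sum_const, smul_eq_mul, mul_comm]
      _ ≤ ∑ Y ∈ Bcl, (cls f Y).card := Finset.sum_le_sum hBcls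
  have hUs : U.card ≤ s := by
    rw [hs]
    exact Finset.card_le_card (Finset.filter_subset _ _)
  obtain ⟨bn, hbn⟩ : ∃ bn, Bcl.card = bn := ⟨_, rfl⟩
  rw [hbn] at hbpos hBvcard hab
  have e1 : (d+1)*k = (d+1)*a' + (d+1) + (d+1)*bn := by
    have hkeq : k = a' + 1 + bn := by omega
    rw [hkeq]
    ring
  have hΔ2 : Δ ≤ d + (d+1)*a' + (d+1)*bn := by
    have h := hΔk
    rw [e1] at h
    omega
  have hstep : U.card * Δ ≤ U.card * (d + (d+1)*a') + U.card * ((d+1)*bn) := by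
    calc U.card * Δ ≤ U.card * (d + (d+1)*a' + (d+1)*bn) :=
          Nat.mul_le_mul_left _ hΔ2
      _ = U.card * (d + (d+1)*a') + U.card * ((d+1)*bn) := by ring
  have hBv_le : Bv.card ≤ U.card * bn := by
    have h1 : (d+1) * Bv.card ≤ U.card * ((d+1)*bn) := by omega
    have h2 : U.card * ((d+1)*bn) = (d+1) * (U.card * bn) := by ring
    rw [h2] at h1
    exact Nat.le_of_mul_le_mul_left h1 (by omega)
  have hfin : bn * (s+1) ≤ bn * s := by
    calc bn * (s+1) ≤ Bv.card := hBvcard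
      _ ≤ U.card * bn := hBv_le
      _ ≤ s * bn := Nat.mul_le_mul_right _ hUs
      _ = bn * s := Nat.mul_comm _ _
  have hexp : bn * (s+1) = bn * s + bn := by ring
  omega
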